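/- (Weierstrass division) Let A be a complete separated local ring with maximal ideal m, and f ∈ A[[T]] a power series that is k-regular in T, i.e. congruent modulo m to u·T^k with u a unit of (A/m)[[T]]. Then for every g ∈ A[[T]] there exists a unique pair (q, r) with q ∈ A[[T]] and r ∈ A[T] of degree < k such that g = qf + r. -/

import Mathlib

open IsLocalRing

namespace WDaux

open PowerSeries

variable {A : Type u} [CommRing A]

/-- Shift a power series down by `k`. -/
noncomputable def sh (k : ℕ) (φ : PowerSeries A) : PowerSeries A :=
  PowerSeries.mk fun i => PowerSeries.coeff (R := A) (i + k) φ

@[simp] lemma coeff_sh (k i : ℕ) (φ : PowerSeries A) :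
    PowerSeries.coeff (R := A) i (sh k φ) = PowerSeries.coeff (R := A) (i + k) φ :=
  coeff_mk _ _

lemma sh_add (k : ℕ) (a b : PowerSeries A) : sh k (a + b) = sh k a + sh k b := by
  ext i; simp

lemma sh_sub (k : ℕ) (a b : PowerSeries A) : sh k (a - b) = sh k a - sh k b := by
  ext i; simp

lemma sh_X_pow_mul (k : ℕ) (a : PowerSeries A) : sh k (X ^ k * a) = a := by
  ext i; simp [coeff_X_pow_mul]

lemma sh_coe_eq_zero {k : ℕ} {p : Polynomial A} (hp : p.degree < (k : WithBot ℕ)) :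
    sh k (p : PowerSeries A) = 0 := by
  ext i
  simp only [coeff_sh, Polynomial.coeff_coe, map_zero]
  exact Polynomial.coeff_eq_zero_of_degree_lt
    (hp.trans_le (by exact_mod_cast Nat.le_add_left k i))

lemma coeff_mul_mem {I J : Ideal A} {a b : PowerSeries A}
    (ha : ∀ i, PowerSeries.coeff (R := A) i a ∈ I) (hb : ∀ i, PowerSeries.coeff (R := A) i b ∈ J)
    (n : ℕ) : PowerSeries.coeff (R := A) n (a * b) ∈ I * J := by
  rw [coeff_mul]
  exact Ideal.sum_mem _ fun p _ => Ideal.mul_mem_mul (ha _) (hb _)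

lemma coeff_mul_left_mem {J : Ideal A} {a : PowerSeries A} (c : PowerSeries A)
    (ha : ∀ i, PowerSeries.coeff (R := A) i a ∈ J) (n : ℕ) :
    PowerSeries.coeff (R := A) n (c * a) ∈ J := by
  rw [coeff_mul]
  exact Ideal.sum_mem _ fun p _ => J.mul_mem_left _ (ha _)

lemma smod_iff (I : Ideal A) (x y : A) :
    x ≡ y [SMOD (I • (⊤ : Submodule A A))] ↔ x - y ∈ I := by
  rw [SModEq.sub_mem, smul_eq_mul, Ideal.mul_top]

variable [IsLocalRing A]

/-- The contraction step: if `d = H⁻¹ * (-(sh k (d * Pf)))` with all coefficients of `Pf`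
in the maximal ideal, then all coefficients of `d` lie in every power of the maximal ideal. -/
lemma coeff_mem_pow_of_fixed {k : ℕ} {Pf : PowerSeries A}
    (hPf : ∀ i, PowerSeries.coeff (R := A) i Pf ∈ maximalIdeal A)
    {c d : PowerSeries A} (hd : d = c * -(sh k (d * Pf))) (n : ℕ) (i : ℕ) :
    PowerSeries.coeff (R := A) i d ∈ (maximalIdeal A) ^ n := by
  induction n generalizing i with
  | zero => simp [Ideal.one_eq_top]
  | succ n ih =>
    rw [hd]
    refine coeff_mul_left_mem c (fun j => ?_) i
    rw [map_neg]
    refine neg_mem ?_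
    rw [coeff_sh, pow_succ]
    exact coeff_mul_mem (fun i => ih i) hPf _

lemma eq_zero_of_coeff_mem [IsAdicComplete (maximalIdeal A) A] {d : PowerSeries A}
    (h : ∀ n i, PowerSeries.coeff (R := A) i d ∈ (maximalIdeal A) ^ n) : d = 0 := by
  ext i
  rw [map_zero]
  refine IsHausdorff.haus (inferInstance : IsHausdorff (maximalIdeal A) A) _ fun n => ?_
  rw [SModEq.zero, smul_eq_mul, Ideal.mul_top]
  exact h n i

end WDaux

open PowerSeries WDaux in
/-- **Weierstrass division.**  Let `A` be a complete separated local ring with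
maximal ideal `m`, and `f ∈ A[[T]]` a power series that is `k`-regular in `T` (its reduction
mod `m` is `T^k` times a unit of `(A/m)[[T]]`).  Then every `g ∈ A[[T]]` can be uniquely
written `g = q·f + r` with `q ∈ A[[T]]` and `r ∈ A[T]` of degree `< k`. -/
theorem weierstrass_division {A : Type u} [CommRing A] [IsLocalRing A]
    [IsAdicComplete (maximalIdeal A) A]
    (k : ℕ) (f : PowerSeries A)
    (hreg : ∃ u : (PowerSeries (A ⧸ maximalIdeal A))ˣ,
      PowerSeries.map (Ideal.Quotient.mk (maximalIdeal A)) f = (u : PowerSeries (A ⧸ maximalIdeal A)) * PowerSeries.X ^ k) :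
    ∀ g : PowerSeries A,
      ∃! qr : PowerSeries A × Polynomial A,
        qr.2.degree < (k : WithBot ℕ) ∧
        g = qr.1 * f + Polynomial.coeToPowerSeries.ringHom qr.2 := by
  obtain ⟨u, hu⟩ := hreg
  -- coefficients of `f` modulo `(maximalIdeal A)`
  have hcoeffs : ∀ i, Ideal.Quotient.mk (maximalIdeal A) (PowerSeries.coeff (R := A) i f)
      = PowerSeries.coeff (R := _) i ((u : PowerSeries (A ⧸ (maximalIdeal A))) * PowerSeries.X ^ k) := by
    intro i
    rw [← coeff_map, hu]
  have hak : IsUnit (PowerSeries.coeff (R := A) k f) := by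
    rw [← IsLocalRing.notMem_maximalIdeal]
    intro hmem
    have h0 : Ideal.Quotient.mk (maximalIdeal A) (PowerSeries.coeff (R := A) k f) = 0 :=
      Ideal.Quotient.eq_zero_iff_mem.2 hmem
    have h1 := hcoeffs k
    rw [h0, coeff_mul_X_pow', if_pos le_rfl, Nat.sub_self,
      coeff_zero_eq_constantCoeff] at h1
    exact (u.isUnit.map (constantCoeff (R := A ⧸ maximalIdeal A))).ne_zero h1.symm
  -- the low coefficients of `f` lie in the maximal ideal
  have hlow : ∀ i < k, PowerSeries.coeff (R := A) i f ∈ (maximalIdeal A) := by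
    intro i hi
    have h1 := hcoeffs i
    rw [coeff_mul_X_pow', if_neg (by omega)] at h1
    exact Ideal.Quotient.eq_zero_iff_mem.1 h1
  -- decompose `f = Pf + X^k * h`
  set h : PowerSeries A := sh k f with hhdef
  set Pf : PowerSeries A := f - X ^ k * h with hPfdef
  have hfsplit : f = Pf + X ^ k * h := by ring
  have hPf : ∀ i, PowerSeries.coeff (R := A) i Pf ∈ (maximalIdeal A) := by
    intro i
    rw [hPfdef, map_sub, coeff_X_pow_mul']
    by_cases hik : k ≤ i
    · rw [if_pos hik, hhdef, coeff_sh, Nat.sub_add_cancel hik, sub_self]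
      exact zero_mem (maximalIdeal A)
    · rw [if_neg hik, sub_zero]
      exact hlow i (by omega)
  have hhunit : IsUnit h := by
    rw [PowerSeries.isUnit_iff_constantCoeff]
    have hc : constantCoeff (R := A) h = PowerSeries.coeff (R := A) k f := by
      rw [← coeff_zero_eq_constantCoeff, hhdef, coeff_sh, Nat.zero_add]
    rw [hc]; exact hak
  obtain ⟨H, hH⟩ := hhunit
  -- key rewriting: `sh k (q * f) = sh k (q * Pf) + q * h`
  have hshqf : ∀ q : PowerSeries A, sh k (q * f) = sh k (q * Pf) + q * h := by
    intro q
    have hqq : q * f = q * Pf + X ^ k * (q * h) := by rw [hfsplit]; ring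
    rw [hqq, sh_add, sh_X_pow_mul]
  intro g
  -- contraction estimate for the iteration map
  have hcontr : ∀ a b : PowerSeries A,
      ((↑H⁻¹ : PowerSeries A) * (sh k g - sh k (a * Pf)))
        - ((↑H⁻¹ : PowerSeries A) * (sh k g - sh k (b * Pf)))
        = (↑H⁻¹ : PowerSeries A) * -(sh k ((a - b) * Pf)) := by
    intro a b
    have habP : (a - b) * Pf = a * Pf - b * Pf := by ring
    rw [habP, sh_sub]
    ring
  -- the approximating sequence
  set Q : ℕ → PowerSeries A := fun n => Nat.rec 0
    (fun _ p => (↑H⁻¹ : PowerSeries A) * (sh k g - sh k (p * Pf))) n with hQ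
  have hQsucc : ∀ n, Q (n + 1)
      = (↑H⁻¹ : PowerSeries A) * (sh k g - sh k (Q n * Pf)) := fun n => rfl
  -- coefficients of consecutive differences
  have hdiff : ∀ n i, PowerSeries.coeff (R := A) i (Q (n + 1) - Q n) ∈ (maximalIdeal A) ^ n := by
    intro n
    induction n with
    | zero => intro i; simp [Ideal.one_eq_top]
    | succ n ih =>
      intro i
      rw [hQsucc (n + 1), hQsucc n, hcontr]
      refine coeff_mul_left_mem _ (fun j => ?_) i
      rw [map_neg]
      refine neg_mem ?_
      rw [coeff_sh, pow_succ]
      exact coeff_mul_mem ih hPf _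
  -- Cauchy property
  have hcau : ∀ a b, a ≤ b → ∀ i, PowerSeries.coeff (R := A) i (Q b - Q a) ∈ (maximalIdeal A) ^ a := by
    intro a b hab
    induction b, hab using Nat.le_induction with
    | base => intro i; simp
    | succ b hab ih =>
      intro i
      have hsplit2 : Q (b + 1) - Q a = (Q (b + 1) - Q b) + (Q b - Q a) := by ring
      rw [hsplit2, map_add]
      exact add_mem (Ideal.pow_le_pow_right hab (hdiff b i)) (ih i)
  -- take the coefficientwise limit
  have hex : ∀ i : ℕ, ∃ L : A, ∀ n,
      (PowerSeries.coeff (R := A) i (Q n)) ≡ L [SMOD ((maximalIdeal A) ^ n • (⊤ : Submodule A A))] := by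
    intro i
    refine IsPrecomplete.prec (inferInstance : IsPrecomplete (maximalIdeal A) A) ?_
    intro a b hab
    rw [smod_iff, ← map_sub]
    have hc := hcau a b hab i
    rw [map_sub] at hc
    simpa using neg_mem hc
  choose L hL using hex
  set q : PowerSeries A := PowerSeries.mk L with hqdef
  have hqQ : ∀ n i, PowerSeries.coeff (R := A) i (q - Q n) ∈ (maximalIdeal A) ^ n := by
    intro n i
    have hmem := (smod_iff ((maximalIdeal A) ^ n) _ _).1 (hL i n)
    rw [map_sub, hqdef, coeff_mk]
    simpa using neg_mem hmem
  -- `q` is a fixed point of the iteration map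
  have hfix : q = (↑H⁻¹ : PowerSeries A) * (sh k g - sh k (q * Pf)) := by
    have key : ∀ n i, PowerSeries.coeff (R := A) i
        (q - (↑H⁻¹ : PowerSeries A) * (sh k g - sh k (q * Pf))) ∈ (maximalIdeal A) ^ n := by
      intro n i
      have h1 : q - (↑H⁻¹ : PowerSeries A) * (sh k g - sh k (q * Pf))
          = (q - Q (n + 1)) +
            (((↑H⁻¹ : PowerSeries A) * (sh k g - sh k (Q n * Pf)))
              - ((↑H⁻¹ : PowerSeries A) * (sh k g - sh k (q * Pf)))) := by
        rw [hQsucc n]; ring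
      rw [h1, map_add]
      refine add_mem (Ideal.pow_le_pow_right n.le_succ (hqQ (n + 1) i)) ?_
      rw [hcontr]
      refine Ideal.pow_le_pow_right n.le_succ ?_
      refine coeff_mul_left_mem _ (fun j => ?_) i
      rw [map_neg]
      refine neg_mem ?_
      rw [coeff_sh, pow_succ]
      refine coeff_mul_mem (fun i' => ?_) hPf _
      have hmem := hqQ n i'
      rw [map_sub] at hmem ⊢
      simpa using neg_mem hmem
    have h0 := eq_zero_of_coeff_mem (fun n i => key n i)
    linear_combination (norm := ring_nf) h0
  -- hence `q * h = sh k g - sh k (q * Pf)`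
  have hqh : q * h = sh k g - sh k (q * Pf) := by
    calc q * h = ((↑H⁻¹ : PowerSeries A) * (sh k g - sh k (q * Pf))) * ↑H := by
            rw [← hfix, hH]
      _ = (sh k g - sh k (q * Pf)) * ((↑H⁻¹ : PowerSeries A) * ↑H) := by ring
      _ = sh k g - sh k (q * Pf) := by rw [Units.inv_mul, mul_one]
  have htau : sh k (g - q * f) = 0 := by
    rw [sh_sub, hshqf]
    linear_combination (norm := ring_nf) -hqh
  -- the remainder
  set r : Polynomial A := trunc k (g - q * f) with hrdef
  have hr : (r : PowerSeries A) = g - q * f := by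
    ext i
    rw [Polynomial.coeff_coe, hrdef, coeff_trunc]
    by_cases hik : i < k
    · rw [if_pos hik]
    · rw [if_neg hik]
      have h0 : PowerSeries.coeff (R := A) (i - k) (sh k (g - q * f)) = 0 := by
        rw [htau, map_zero]
      rw [coeff_sh, Nat.sub_add_cancel (by omega)] at h0
      exact h0.symm
  have hdegr : r.degree < (k : WithBot ℕ) := degree_trunc_lt _ _
  refine ⟨(q, r), ⟨hdegr, by
    rw [show Polynomial.coeToPowerSeries.ringHom r = (r : PowerSeries A) from rfl, hr]
    ring⟩, ?_⟩
  -- uniqueness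
  rintro ⟨q2, r2⟩ ⟨hdeg2, heq2⟩
  rw [show Polynomial.coeToPowerSeries.ringHom r2 = (r2 : PowerSeries A) from rfl] at heq2
  have hsub : (q2 - q) * f + ((r2 : PowerSeries A) - (r : PowerSeries A)) = 0 := by
    have h2 : g = q * f + (r : PowerSeries A) := by rw [hr]; ring
    linear_combination (norm := ring_nf) h2 - heq2
  have hdh : (q2 - q) * h = -(sh k ((q2 - q) * Pf)) := by
    have h1 : sh k ((q2 - q) * f + ((r2 : PowerSeries A) - (r : PowerSeries A))) = 0 := by
      rw [hsub]
      ext i; simp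
    rw [sh_add, sh_sub, sh_coe_eq_zero hdeg2, sh_coe_eq_zero hdegr, hshqf] at h1
    linear_combination (norm := ring_nf) h1
  have hdfix : q2 - q = (↑H⁻¹ : PowerSeries A) * -(sh k ((q2 - q) * Pf)) := by
    calc q2 - q = (q2 - q) * (↑H * ↑H⁻¹ : PowerSeries A) := by
            rw [Units.mul_inv, mul_one]
      _ = ((q2 - q) * h) * (↑H⁻¹ : PowerSeries A) := by rw [hH]; ring
      _ = (↑H⁻¹ : PowerSeries A) * -(sh k ((q2 - q) * Pf)) := by rw [hdh]; ring
  have hd0 : q2 - q = 0 := eq_zero_of_coeff_mem (coeff_mem_pow_of_fixed hPf hdfix)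
  have hq2 : q2 = q := by linear_combination (norm := ring_nf) hd0
  have hr2 : r2 = r := by
    have h3 := hsub
    rw [hd0] at h3
    have hcr : (r2 : PowerSeries A) = (r : PowerSeries A) := by
      linear_combination (norm := ring_nf) h3
    exact Polynomial.coe_inj.mp hcr
  rw [Prod.ext_iff]
  exact ⟨hq2, hr2⟩
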